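/- For the path graph P_n with attachment set At(P_n): if At(P_n) consists of a single vertex of degree 2, then fdim*(P_n) = 2; if At(P_n) contains a leaf of P_n or contains at least two vertices, then fdim*(P_n) = 0. -/
import Mathlib


open SimpleGraph

/-- `X` is a resolving set of `G`: every pair of distinct vertices is
distinguished by the distance to some vertex of `X`. -/
def isResolving {V : Type*} (G : SimpleGraph V) (X : Set V) : Prop :=
  ∀ u v : V, u ≠ v → ∃ x ∈ X, G.dist u x ≠ G.dist v x

/-- `X` is a fault-tolerant resolving set of `G`. -/
def isFTResolving {V : Type*} (G : SimpleGraph V) (X : Set V) : Prop :=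
  ∀ s ∈ X, isResolving G (X \ {s})

/-- The fault-tolerant metric dimension of `G`. -/
noncomputable def fdim {V : Type*} (G : SimpleGraph V) : ℕ :=
  sInf {n | ∃ X : Set V, isFTResolving G X ∧ X.ncard = n}

/-- The attaching fault-tolerant metric dimension of `G` with respect to the
attachment set `At`: the least cardinality of an `F ⊆ V(G) \ At` such that
`F ∪ At` is a resolving set of `G` and `(F ∪ At) \ {x}` is a resolving set of
`G` for every `x ∈ F`. -/
noncomputable def fdimStar {V : Type*} (G : SimpleGraph V) (At : Set V) : ℕ :=
  sInf {n | ∃ F : Set V, F ⊆ Atᶜ ∧ isResolving G (F ∪ At) ∧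
    (∀ x ∈ F, isResolving G ((F ∪ At) \ {x})) ∧ F.ncard = n}

private lemma walk_le_aux {n : ℕ} {i j : Fin n} (w : (pathGraph n).Walk i j) :
    ((i : ℤ) - (j : ℤ)).natAbs ≤ w.length := by
  induction w with
  | nil => simp
  | @cons u v x h p ih =>
    rw [pathGraph_adj] at h
    rw [Walk.length_cons]
    omega

private lemma walk_exists {n : ℕ} (k : ℕ) (i j : Fin n) (h : (i : ℕ) + k = (j : ℕ)) :
    ∃ w : (pathGraph n).Walk i j, w.length = k := by
  induction k generalizing i with
  | zero =>
    have : i = j := Fin.ext (by omega)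
    subst this; exact ⟨Walk.nil, rfl⟩
  | succ m ih =>
    have hlt : (i : ℕ) + 1 < n := by have := j.isLt; omega
    set i' : Fin n := ⟨(i : ℕ) + 1, by omega⟩ with hi'
    have hadj : (pathGraph n).Adj i i' := by rw [pathGraph_adj]; left; rfl
    obtain ⟨w, hw⟩ := ih i' (by simp [hi']; omega)
    exact ⟨Walk.cons hadj w, by simp [hw]⟩

private lemma pathGraph_dist {n : ℕ} (i j : Fin n) :
    (pathGraph n).dist i j = ((i : ℤ) - (j : ℤ)).natAbs := by
  rcases le_or_gt (i : ℕ) (j : ℕ) with hle | hlt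
  · obtain ⟨w, hw⟩ := walk_exists ((j : ℕ) - (i : ℕ)) i j (by omega)
    have h1 := SimpleGraph.dist_le w
    obtain ⟨w', hw'⟩ := Reachable.exists_walk_length_eq_dist (⟨w⟩ : (pathGraph n).Reachable i j)
    have h2 := walk_le_aux w'
    omega
  · obtain ⟨w, hw⟩ := walk_exists ((i : ℕ) - (j : ℕ)) j i (by omega)
    have h1 := SimpleGraph.dist_le w
    have hr : (pathGraph n).Reachable j i := ⟨w⟩
    obtain ⟨w', hw'⟩ := hr.exists_walk_length_eq_dist
    have h2 := walk_le_aux w'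
    rw [SimpleGraph.dist_comm]
    omega

private lemma resolve_pair {n : ℕ} {S : Set (Fin n)} {x y : Fin n}
    (hx : x ∈ S) (hy : y ∈ S) (hxy : x ≠ y) : isResolving (pathGraph n) S := by
  intro u v huv
  by_contra hc
  push_neg at hc
  have h1 := hc x hx
  have h2 := hc y hy
  rw [pathGraph_dist, pathGraph_dist] at h1 h2
  have hxy' : (x : ℕ) ≠ (y : ℕ) := fun h => hxy (Fin.ext h)
  have huv' : (u : ℕ) ≠ (v : ℕ) := fun h => huv (Fin.ext h)
  omega

private lemma resolve_leaf {n : ℕ} {S : Set (Fin n)} {a : Fin n} (ha : a ∈ S)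
    (h : (a : ℕ) = 0 ∨ (a : ℕ) + 1 = n) : isResolving (pathGraph n) S := by
  intro u v huv
  refine ⟨a, ha, ?_⟩
  rw [pathGraph_dist, pathGraph_dist]
  have h1 : (u : ℕ) ≠ (v : ℕ) := fun h => huv (Fin.ext h)
  have h2 := u.isLt
  have h3 := v.isLt
  omega

private lemma not_resolve_singleton {n : ℕ} {a : Fin n} (h1 : 1 ≤ (a : ℕ))
    (h2 : (a : ℕ) + 1 < n) : ¬ isResolving (pathGraph n) ({a} : Set (Fin n)) := by
  intro hres
  obtain ⟨x, hx, hne⟩ := hres ⟨(a : ℕ) - 1, by omega⟩ ⟨(a : ℕ) + 1, by omega⟩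
    (by simp only [ne_eq, Fin.mk.injEq]; omega)
  rw [Set.mem_singleton_iff] at hx
  subst hx
  rw [pathGraph_dist, pathGraph_dist] at hne
  simp only [Fin.val_mk] at hne
  omega

private lemma deg_two {n : ℕ} {a : Fin n} (h : ((pathGraph n).neighborSet a).ncard = 2) :
    1 ≤ (a : ℕ) ∧ (a : ℕ) + 1 < n := by
  have h1 : 1 < ((pathGraph n).neighborSet a).ncard := by omega
  rw [Set.one_lt_ncard (Set.toFinite _)] at h1
  obtain ⟨b, hb, c, hc, hbc⟩ := h1
  rw [SimpleGraph.mem_neighborSet, pathGraph_adj] at hb hc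
  have hbn := b.isLt
  have hcn := c.isLt
  have : (b : ℕ) ≠ (c : ℕ) := fun h => hbc (Fin.ext h)
  omega

private lemma deg_one {n : ℕ} {a : Fin n} (h : ((pathGraph n).neighborSet a).ncard = 1) :
    (a : ℕ) = 0 ∨ (a : ℕ) + 1 = n := by
  by_contra hc
  push_neg at hc
  have han := a.isLt
  have h1 : 1 ≤ (a : ℕ) := by omega
  have h2 : (a : ℕ) + 1 < n := by omega
  have hb : (⟨(a : ℕ) - 1, by omega⟩ : Fin n) ∈ (pathGraph n).neighborSet a := by
    rw [SimpleGraph.mem_neighborSet, pathGraph_adj]; right; simp; omega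
  have hcmem : (⟨(a : ℕ) + 1, by omega⟩ : Fin n) ∈ (pathGraph n).neighborSet a := by
    rw [SimpleGraph.mem_neighborSet, pathGraph_adj]; left; simp
  have : 1 < ((pathGraph n).neighborSet a).ncard := by
    rw [Set.one_lt_ncard (Set.toFinite _)]
    exact ⟨_, hb, _, hcmem, by simp only [ne_eq, Fin.mk.injEq]; omega⟩
  omega

/-- For the path `P_n`: if `At` is a single vertex of degree `2` then
`fdim*(P_n) = 2`; if `At` contains a leaf or at least two vertices then
`fdim*(P_n) = 0`. -/
theorem fdimStar_pathGraph (n : ℕ) (At : Set (Fin n)) :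
    ((∃ a, At = {a} ∧ ((SimpleGraph.pathGraph n).neighborSet a).ncard = 2) →
      fdimStar (SimpleGraph.pathGraph n) At = 2) ∧
    (((∃ a ∈ At, ((SimpleGraph.pathGraph n).neighborSet a).ncard = 1) ∨ 2 ≤ At.ncard) →
      fdimStar (SimpleGraph.pathGraph n) At = 0) := by
  constructor
  · rintro ⟨a, rfl, hdeg⟩
    obtain ⟨ha1, ha2⟩ := deg_two hdeg
    set x0 : Fin n := ⟨0, by omega⟩ with hx0
    set x1 : Fin n := ⟨n - 1, by omega⟩ with hx1
    have hx01 : x0 ≠ x1 := by simp [hx0, hx1, Fin.ext_iff]; omega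
    have hax0 : x0 ≠ a := by simp [hx0, Fin.ext_iff]; omega
    have hax1 : x1 ≠ a := by simp [hx1, Fin.ext_iff]; omega
    have hmem : (2 : ℕ) ∈ {m | ∃ F : Set (Fin n), F ⊆ ({a} : Set (Fin n))ᶜ ∧
        isResolving (pathGraph n) (F ∪ {a}) ∧
        (∀ x ∈ F, isResolving (pathGraph n) ((F ∪ {a}) \ {x})) ∧ F.ncard = m} := by
      refine ⟨{x0, x1}, ?_, ?_, ?_, Set.ncard_pair hx01⟩
      · rintro z (rfl | rfl) <;> simpa
      · exact resolve_pair (Set.mem_union_left _ (by simp))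
          (Set.mem_union_left _ (by simp)) hx01
      · rintro x (rfl | rfl)
        · exact resolve_pair (x := x1) (y := a) ⟨Set.mem_union_left _ (by simp), by simpa using hx01.symm⟩
            ⟨Set.mem_union_right _ rfl, by simpa using (hax0.symm)⟩ hax1
        · exact resolve_pair (x := x0) (y := a) ⟨Set.mem_union_left _ (by simp), by simpa using hx01⟩
            ⟨Set.mem_union_right _ rfl, by simpa using (hax1.symm)⟩ hax0
    refine le_antisymm (Nat.sInf_le hmem) (le_csInf ⟨2, hmem⟩ ?_)
    rintro m ⟨F, hFc, hres, hres2, rfl⟩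
    by_contra hlt
    push_neg at hlt
    interval_cases h : F.ncard
    · have hF : F = ∅ := (Set.ncard_eq_zero (Set.toFinite F)).mp h
      subst hF
      rw [Set.empty_union] at hres
      exact not_resolve_singleton ha1 ha2 hres
    · obtain ⟨x, rfl⟩ := Set.ncard_eq_one.mp h
      have hxa : x ≠ a := by simpa using hFc (Set.mem_singleton x)
      have := hres2 x (Set.mem_singleton x)
      have heq : (({x} ∪ {a} : Set (Fin n)) \ {x}) = {a} := by
        ext z
        simp only [Set.mem_diff, Set.mem_union, Set.mem_singleton_iff]
        constructor
        · rintro ⟨rfl | rfl, h2⟩ <;> tauto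
        · rintro rfl; exact ⟨Or.inr rfl, hxa.symm⟩
      rw [heq] at this
      exact not_resolve_singleton ha1 ha2 this
  · intro h
    have hres : isResolving (pathGraph n) At := by
      rcases h with ⟨a, haAt, hdeg⟩ | hAt
      · exact resolve_leaf haAt (deg_one hdeg)
      · obtain ⟨x, hx, y, hy, hxy⟩ := (Set.one_lt_ncard (Set.toFinite At)).mp (by omega)
        exact resolve_pair hx hy hxy
    rw [fdimStar, Nat.sInf_eq_zero]
    exact Or.inl ⟨∅, by simp, by simpa using hres, by simp, by simp⟩
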